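/- Let u ∈ ℝ^n satisfy ∑_{j=1}^n u_j = n and u_j ≥ 1/2 for all j. Then 0 ≤ Δ12(u) ≤ 2(ln(n) + 1)·n·δ(u). -/

import Mathlib

/-- The entropy proximity measure `δ(u) = (1/n) ∑ u_j ln u_j`. -/
noncomputable def entropyDelta (n : ℕ) (u : Fin n → ℝ) : ℝ :=
  (1 / (n : ℝ)) * ∑ j, u j * Real.log (u j)

/-- `Δ12(u) = ∑ u_j ln² u_j`. -/
noncomputable def Delta12 (n : ℕ) (u : Fin n → ℝ) : ℝ :=
  ∑ j, u j * Real.log (u j) ^ 2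

lemma aux_nonneg {x : ℝ} (hx : 0 < x) : 0 ≤ x * Real.log x - x + 1 := by
  have h := Real.log_le_sub_one_of_pos (show (0:ℝ) < 1/x by positivity)
  rw [Real.log_div one_ne_zero hx.ne', Real.log_one] at h
  have h2 : x * (0 - Real.log x) ≤ x * (1/x - 1) := mul_le_mul_of_nonneg_left h hx.le
  have h3 : x * (1/x) = 1 := by field_simp
  nlinarith

lemma hasDerivA {y : ℝ} (hy : 0 < y) :
    HasDerivAt (fun y => 2*(y*Real.log y - y + 1) - y*(Real.log y)^2)
      (-(Real.log y)^2) y := by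
  have h1 := Real.hasDerivAt_mul_log hy.ne'
  have hlog := Real.hasDerivAt_log hy.ne'
  have h3 := (hasDerivAt_id y).mul (hlog.pow 2)
  have h := (((h1.sub (hasDerivAt_id y)).add_const 1).const_mul 2).sub h3
  refine h.congr_deriv ?_
  simp only [Pi.pow_apply, id]
  field_simp
  ring

lemma hasDerivB {y : ℝ} (hy : 0 < y) :
    HasDerivAt (fun y => (Real.log y + 2)*(y*Real.log y - y + 1) - y*(Real.log y)^2)
      (Real.log y - 1 + 1/y) y := by
  have h1 := Real.hasDerivAt_mul_log hy.ne'
  have hlog := Real.hasDerivAt_log hy.ne'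
  have h3 := (hasDerivAt_id y).mul (hlog.pow 2)
  have h := ((hlog.add_const 2).mul ((h1.sub (hasDerivAt_id y)).add_const 1)).sub h3
  refine h.congr_deriv ?_
  simp only [Pi.pow_apply, Pi.sub_apply, id]
  field_simp
  ring

lemma keyA {x : ℝ} (hx : 0 < x) (hx1 : x ≤ 1) :
    x * Real.log x ^ 2 ≤ 2 * (x * Real.log x - x + 1) := by
  set f : ℝ → ℝ := fun y => 2*(y*Real.log y - y + 1) - y*(Real.log y)^2 with hf
  have hlc : ContinuousOn Real.log (Set.Icc x 1) := by
    apply Real.continuousOn_log.mono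
    intro y hy
    simp only [Set.mem_Icc] at hy
    simp only [Set.mem_compl_iff, Set.mem_singleton_iff]
    intro h; rw [h] at hy; linarith [hy.1]
  have hanti : AntitoneOn f (Set.Icc x 1) := by
    apply antitoneOn_of_deriv_nonpos (convex_Icc x 1)
    · exact (continuousOn_const.mul (((continuousOn_id.mul hlc).sub
        continuousOn_id).add continuousOn_const)).sub
        (continuousOn_id.mul (hlc.pow 2))
    · intro y hy
      rw [interior_Icc] at hy
      exact (hasDerivA (lt_trans hx hy.1)).differentiableAt.differentiableWithinAt
    · intro y hy
      rw [interior_Icc] at hy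
      rw [(hasDerivA (lt_trans hx hy.1)).deriv]
      nlinarith [sq_nonneg (Real.log y)]
  have h01 : f 1 ≤ f x := hanti (Set.left_mem_Icc.2 hx1) (Set.right_mem_Icc.2 hx1) hx1
  simp only [hf, Real.log_one] at h01
  nlinarith [h01]

lemma keyB {x : ℝ} (hx1 : 1 ≤ x) :
    x * Real.log x ^ 2 ≤ (Real.log x + 2) * (x * Real.log x - x + 1) := by
  set f : ℝ → ℝ := fun y => (Real.log y + 2)*(y*Real.log y - y + 1) - y*(Real.log y)^2 with hf
  have hlc : ContinuousOn Real.log (Set.Icc 1 x) := by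
    apply Real.continuousOn_log.mono
    intro y hy
    simp only [Set.mem_Icc] at hy
    simp only [Set.mem_compl_iff, Set.mem_singleton_iff]
    intro h; rw [h] at hy; linarith [hy.1]
  have hmono : MonotoneOn f (Set.Icc 1 x) := by
    apply monotoneOn_of_deriv_nonneg (convex_Icc 1 x)
    · exact ((hlc.add continuousOn_const).mul (((continuousOn_id.mul hlc).sub
        continuousOn_id).add continuousOn_const)).sub
        (continuousOn_id.mul (hlc.pow 2))
    · intro y hy
      rw [interior_Icc] at hy
      exact (hasDerivB (lt_of_lt_of_le one_pos hy.1.le)).differentiableAt.differentiableWithinAt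
    · intro y hy
      rw [interior_Icc] at hy
      have hy0 : (0:ℝ) < y := lt_of_lt_of_le one_pos hy.1.le
      rw [(hasDerivB hy0).deriv]
      have h := Real.log_le_sub_one_of_pos (show (0:ℝ) < 1/y by positivity)
      rw [Real.log_div one_ne_zero hy0.ne', Real.log_one] at h
      have hyinv : 1/y ≤ 1 := by
        rw [div_le_one hy0]; linarith [hy.1]
      linarith
  have h01 : f 1 ≤ f x := hmono (Set.left_mem_Icc.2 hx1) (Set.right_mem_Icc.2 hx1) hx1
  simp only [hf, Real.log_one] at h01
  nlinarith [h01]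

theorem stmt_8 (n : ℕ) (hn : 1 ≤ n) (u : Fin n → ℝ) (hsum : ∑ j, u j = (n : ℝ))
    (hlb : ∀ j, 1 / 2 ≤ u j) :
    0 ≤ Delta12 n u ∧ Delta12 n u ≤ 2 * (Real.log n + 1) * n * entropyDelta n u := by
  have hn0 : (0:ℝ) < n := by exact_mod_cast hn
  have hpos : ∀ j, 0 < u j := fun j => lt_of_lt_of_le (by norm_num) (hlb j)
  have hln : 0 ≤ Real.log n := Real.log_nonneg (by exact_mod_cast hn)
  have hub : ∀ j, u j ≤ n := by
    intro j
    calc u j ≤ ∑ i, u i :=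
      Finset.single_le_sum (fun i _ => (hpos i).le) (Finset.mem_univ j)
    _ = n := hsum
  have hterm : ∀ j, u j * Real.log (u j) ^ 2 ≤
      2 * (Real.log n + 1) * (u j * Real.log (u j) - u j + 1) := by
    intro j
    have hnn := aux_nonneg (hpos j)
    rcases le_or_gt (u j) 1 with h1 | h1
    · calc u j * Real.log (u j) ^ 2 ≤ 2 * (u j * Real.log (u j) - u j + 1) :=
        keyA (hpos j) h1
      _ ≤ 2 * (Real.log n + 1) * (u j * Real.log (u j) - u j + 1) := by nlinarith
    · have hB := keyB h1.le
      have hlog : Real.log (u j) ≤ Real.log n := Real.log_le_log (hpos j) (hub j)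
      calc u j * Real.log (u j) ^ 2
          ≤ (Real.log (u j) + 2) * (u j * Real.log (u j) - u j + 1) := hB
        _ ≤ 2 * (Real.log n + 1) * (u j * Real.log (u j) - u j + 1) := by nlinarith
  constructor
  · exact Finset.sum_nonneg fun j _ => mul_nonneg (hpos j).le (sq_nonneg _)
  · have hsumineq : Delta12 n u ≤
        ∑ j, 2 * (Real.log n + 1) * (u j * Real.log (u j) - u j + 1) :=
      Finset.sum_le_sum fun j _ => hterm j
    have hrw : ∑ j, 2 * (Real.log n + 1) * (u j * Real.log (u j) - u j + 1)
        = 2 * (Real.log n + 1) * (∑ j, u j * Real.log (u j)) := by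
      rw [← Finset.mul_sum]
      congr 1
      rw [Finset.sum_add_distrib, Finset.sum_sub_distrib, hsum]
      simp [Finset.card_univ]
    have hent : 2 * (Real.log n + 1) * n * entropyDelta n u
        = 2 * (Real.log n + 1) * (∑ j, u j * Real.log (u j)) := by
      unfold entropyDelta
      field_simp
    rw [hent]
    calc Delta12 n u ≤ _ := hsumineq
    _ = _ := hrw
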